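/- For every integer d ≥ 2 and every integer n ≥ 1, letting m = d·⌊n^{1/d}⌋ (floor of the real d-th root of n), one has p_d(n) ≤ d^m · Σ_λ Π_i p_{d−1}(λ_i), where the sum runs over all integer partitions λ of n into at most m positive parts λ_1 ≥ λ_2 ≥ ... and the product runs over the parts of λ. -/

import Mathlib

/-- `lowerCount d n` is the number of lower sets `Q ⊆ ℕ^d` with exactly `n` elements. -/
noncomputable def lowerCount (d n : ℕ) : ℕ :=
  Nat.card {Q : Finset (Fin d → ℕ) // IsLowerSet (↑Q : Set (Fin d → ℕ)) ∧ Q.card = n}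

namespace LowerAux

lemma box_le {a : ℕ} {Q : Finset (Fin a → ℕ)} (hQ : IsLowerSet (↑Q : Set (Fin a → ℕ)))
    {k : Fin a → ℕ} (hk : k ∈ Q) : ∏ i, (k i + 1) ≤ Q.card := by
  have hsub : Fintype.piFinset (fun i => Finset.range (k i + 1)) ⊆ Q := by
    intro f hf
    simp only [Fintype.mem_piFinset, Finset.mem_range, Nat.lt_succ_iff] at hf
    exact hQ (fun i => hf i) hk
  calc ∏ i, (k i + 1) = (Fintype.piFinset (fun i => Finset.range (k i + 1))).card := by
        rw [Fintype.card_piFinset]; simp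
    _ ≤ Q.card := Finset.card_le_card hsub

lemma coord_lt {a : ℕ} {Q : Finset (Fin a → ℕ)} (hQ : IsLowerSet (↑Q : Set (Fin a → ℕ)))
    {k : Fin a → ℕ} (hk : k ∈ Q) (i : Fin a) : k i < Q.card := by
  have h1 : k i + 1 ≤ ∏ j, (k j + 1) :=
    Finset.single_le_prod' (f := fun j => k j + 1) (fun j _ => Nat.succ_le_succ (Nat.zero_le _)) (Finset.mem_univ i)
  have := box_le hQ hk
  omega
  
instance finite_lower {a s : ℕ} :
    Finite {Q : Finset (Fin a → ℕ) // IsLowerSet (↑Q : Set (Fin a → ℕ)) ∧ Q.card = s} := by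
  classical
  set B : Set (Fin a → ℕ) := Set.pi Set.univ (fun _ => Set.Iio s) with hB
  have hBfin : B.Finite := Set.Finite.pi (fun i => Set.finite_Iio s)
  have hfin : {T : Set (Fin a → ℕ) | T ⊆ B}.Finite := Set.Finite.finite_subsets hBfin
  haveI := hfin.to_subtype
  apply Finite.of_injective
    (fun Q => (⟨(↑Q.1 : Set (Fin a → ℕ)), by
      intro k hk
      simp only [Finset.mem_coe] at hk
      intro i _
      have := coord_lt Q.2.1 hk i
      simpa [Q.2.2] using this⟩ : {T : Set (Fin a → ℕ) | T ⊆ B}))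
  intro Q Q' h
  apply Subtype.ext
  exact Finset.coe_injective (congrArg Subtype.val h)

lemma lowerCount_zero (a : ℕ) : lowerCount a 0 = 1 := by
  classical
  haveI : Unique {Q : Finset (Fin a → ℕ) // IsLowerSet (↑Q : Set (Fin a → ℕ)) ∧ Q.card = 0} := by
    refine ⟨⟨⟨∅, by simp [isLowerSet_empty], by simp⟩⟩, ?_⟩
    rintro ⟨Q, hQ, hc⟩
    have : Q = ∅ := Finset.card_eq_zero.mp hc
    subst this; rfl
  exact Nat.card_unique


variable {e t : ℕ}

def offs (t : ℕ) (i : Fin (e+1)) (l : Fin e) : ℕ :=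
  if (i.succAbove l : ℕ) < (i : ℕ) then t else 0

def down (t : ℕ) (i : Fin (e+1)) (k : Fin (e+1) → ℕ) : Fin e → ℕ :=
  fun l => k (i.succAbove l) - offs t i l

def up (t : ℕ) (i : Fin (e+1)) (j : ℕ) (r : Fin e → ℕ) : Fin (e+1) → ℕ :=
  i.insertNth j (fun l => r l + offs t i l)

lemma down_up (i : Fin (e+1)) (j : ℕ) (r : Fin e → ℕ) : down t i (up t i j r) = r := by
  funext l
  simp [down, up, Fin.insertNth_apply_succAbove]

lemma up_apply_same (i : Fin (e+1)) (j : ℕ) (r : Fin e → ℕ) : up t i j r i = j := by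
  simp [up]

lemma up_apply_succAbove (i : Fin (e+1)) (j : ℕ) (r : Fin e → ℕ) (l : Fin e) :
    up t i j r (i.succAbove l) = r l + offs t i l := by
  simp [up, Fin.insertNth_apply_succAbove]

lemma up_down {i : Fin (e+1)} {k : Fin (e+1) → ℕ} {j : ℕ} (h1 : k i = j)
    (h2 : ∀ i' : Fin (e+1), i' < i → t ≤ k i') : up t i j (down t i k) = k := by
  funext x
  rcases eq_or_ne x i with rfl | hx
  · rw [up_apply_same, h1]
  · obtain ⟨l, rfl⟩ := Fin.exists_succAbove_eq hx
    rw [up_apply_succAbove]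
    have : offs t i l ≤ k (i.succAbove l) := by
      unfold offs
      split
      · exact h2 _ (by rwa [Fin.lt_iff_val_lt_val])
      · exact Nat.zero_le _
    simp [down, Nat.sub_add_cancel this]

lemma up_le {i : Fin (e+1)} {k : Fin (e+1) → ℕ} {j : ℕ} (h1 : j ≤ k i)
    (h2 : ∀ i' : Fin (e+1), i' < i → t ≤ k i') {r : Fin e → ℕ} (hr : r ≤ down t i k) :
    up t i j r ≤ k := by
  intro x
  rcases eq_or_ne x i with rfl | hx
  · rw [up_apply_same]; exact h1
  · obtain ⟨l, rfl⟩ := Fin.exists_succAbove_eq hx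
    rw [up_apply_succAbove]
    have hle : offs t i l ≤ k (i.succAbove l) := by
      unfold offs
      split
      · exact h2 _ (by rwa [Fin.lt_iff_val_lt_val])
      · exact Nat.zero_le _
    have h3 : r l ≤ k (i.succAbove l) - offs t i l := hr l
    calc r l + offs t i l ≤ (k (i.succAbove l) - offs t i l) + offs t i l :=
          Nat.add_le_add_right h3 _
      _ = k (i.succAbove l) := Nat.sub_add_cancel hle

lemma up_ge_offs {i : Fin (e+1)} (j : ℕ) (r : Fin e → ℕ) {i' : Fin (e+1)} (h : i' < i) :
    t ≤ up t i j r i' := by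
  obtain ⟨l, rfl⟩ := Fin.exists_succAbove_eq h.ne
  rw [up_apply_succAbove]
  have : offs t i l = t := by
    unfold offs
    rw [if_pos (by rwa [← Fin.lt_iff_val_lt_val])]
  omega




def dirSet (t : ℕ) (k : Fin (e+1) → ℕ) : Finset (Fin (e+1)) :=
  Finset.univ.filter (fun i => k i < t)

def minDir (t : ℕ) (k : Fin (e+1) → ℕ) : Fin (e+1) :=
  if h : (dirSet t k).Nonempty then (dirSet t k).min' h else 0

def classify (t : ℕ) (k : Fin (e+1) → ℕ) : Fin (e+1) × ℕ :=
  (minDir t k, k (minDir t k))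

lemma minDir_spec {k : Fin (e+1) → ℕ} (hex : ∃ i, k i < t) :
    k (minDir t k) < t ∧ ∀ i' : Fin (e+1), i' < minDir t k → t ≤ k i' := by
  obtain ⟨i, hi⟩ := hex
  have hne : (dirSet t k).Nonempty := ⟨i, by simp [dirSet, hi]⟩
  rw [minDir, dif_pos hne]
  constructor
  · have := (dirSet t k).min'_mem hne
    simpa [dirSet] using this
  · intro i' hi'
    by_contra h
    push_neg at h
    have : (dirSet t k).min' hne ≤ i' := Finset.min'_le _ _ (by simp [dirSet, h])
    exact absurd hi' (not_lt.mpr this)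

lemma classify_eq_iff {k : Fin (e+1) → ℕ} (hex : ∃ i, k i < t) {i : Fin (e+1)} {j : ℕ}
    (hj : j < t) :
    classify t k = (i, j) ↔ (k i = j ∧ ∀ i' : Fin (e+1), i' < i → t ≤ k i') := by
  obtain ⟨h1, h2⟩ := minDir_spec hex
  constructor
  · intro h
    rw [classify, Prod.mk.injEq] at h
    exact ⟨h.1 ▸ h.2, h.1 ▸ h2⟩
  · rintro ⟨hk, hmin⟩
    have hmd : minDir t k = i := by
      rcases lt_trichotomy (minDir t k) i with h | h | h
      · exact absurd h1 (not_lt.mpr (by rw [hk] at *; exact hmin _ h))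
      · exact h
      · exact absurd (hk ▸ hj : k i < t) (not_lt.mpr (h2 _ h))
    rw [classify, hmd, hk]

variable (t) in
def slice (Q : Finset (Fin (e+1) → ℕ)) (s : Fin (e+1) × Fin t) : Finset (Fin (e+1) → ℕ) :=
  Q.filter (fun k => classify t k = (s.1, (s.2 : ℕ)))

variable (t) in
def sliceR (Q : Finset (Fin (e+1) → ℕ)) (s : Fin (e+1) × Fin t) : Finset (Fin e → ℕ) :=
  (slice t Q s).image (down t s.1)

variable (t) in
def sz (Q : Finset (Fin (e+1) → ℕ)) (s : Fin (e+1) × Fin t) : ℕ := (sliceR t Q s).card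

section WithQ
variable {Q : Finset (Fin (e+1) → ℕ)}

lemma mem_slice (hQt : ∀ k ∈ Q, ∃ i, k i < t) {k : Fin (e+1) → ℕ} {s : Fin (e+1) × Fin t} :
    k ∈ slice t Q s ↔ k ∈ Q ∧ k s.1 = (s.2 : ℕ) ∧ ∀ i' : Fin (e+1), i' < s.1 → t ≤ k i' := by
  rw [slice, Finset.mem_filter]
  constructor
  · rintro ⟨hkQ, hc⟩
    have := (classify_eq_iff (hQt k hkQ) s.2.2).mp hc
    exact ⟨hkQ, this.1, this.2⟩
  · rintro ⟨hkQ, h1, h2⟩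
    exact ⟨hkQ, (classify_eq_iff (hQt k hkQ) s.2.2).mpr ⟨h1, h2⟩⟩

lemma up_down_mem_slice (hQt : ∀ k ∈ Q, ∃ i, k i < t) {k : Fin (e+1) → ℕ} {s : Fin (e+1) × Fin t} (hk : k ∈ slice t Q s) :
    up t s.1 (s.2 : ℕ) (down t s.1 k) = k := by
  rw [mem_slice hQt] at hk
  exact up_down hk.2.1 hk.2.2

lemma card_sliceR (hQt : ∀ k ∈ Q, ∃ i, k i < t) (s : Fin (e+1) × Fin t) : sz t Q s = (slice t Q s).card := by
  rw [sz, sliceR]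
  apply Finset.card_image_of_injOn
  intro k hk k' hk' h
  have := congrArg (up t s.1 (s.2 : ℕ)) h
  rwa [up_down_mem_slice hQt hk, up_down_mem_slice hQt hk'] at this

lemma lower_sliceR (hQ : IsLowerSet (↑Q : Set (Fin (e+1) → ℕ))) (hQt : ∀ k ∈ Q, ∃ i, k i < t) (s : Fin (e+1) × Fin t) :
    IsLowerSet (↑(sliceR t Q s) : Set (Fin e → ℕ)) := by
  intro r r' hle hr
  simp only [Finset.mem_coe, sliceR, Finset.mem_image] at hr ⊢
  obtain ⟨k, hk, rfl⟩ := hr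
  rw [mem_slice hQt] at hk
  obtain ⟨hkQ, h1, h2⟩ := hk
  refine ⟨up t s.1 (s.2 : ℕ) r', ?_, down_up _ _ _⟩
  have hmem : up t s.1 (s.2 : ℕ) r' ∈ Q := hQ (up_le (le_of_eq h1.symm) h2 hle) hkQ
  rw [mem_slice hQt]
  exact ⟨hmem, up_apply_same _ _ _, fun i' hi' => up_ge_offs _ _ hi'⟩

lemma sum_sz (hQt : ∀ k ∈ Q, ∃ i, k i < t) : ∑ s : Fin (e+1) × Fin t, sz t Q s = Q.card := by
  have h := Finset.card_eq_sum_card_fiberwise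
    (f := classify t) (s := Q) (t := Finset.univ ×ˢ Finset.range t) ?_
  · rw [h, Finset.sum_product]
    rw [Fintype.sum_prod_type]
    refine Finset.sum_congr rfl (fun i _ => ?_)
    rw [← Fin.sum_univ_eq_sum_range]
    refine Finset.sum_congr rfl (fun j _ => ?_)
    rw [card_sliceR hQt]
    rfl
  · intro k hk
    obtain ⟨h1, _⟩ := minDir_spec (hQt k hk)
    simp [classify, Finset.mem_product, h1]
lemma sz_le_card (hQt : ∀ k ∈ Q, ∃ i, k i < t) (s : Fin (e+1) × Fin t) : sz t Q s ≤ Q.card := by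
  rw [card_sliceR hQt]
  exact Finset.card_le_card (Finset.filter_subset _ _)

lemma sz_anti (hQ : IsLowerSet (↑Q : Set (Fin (e+1) → ℕ))) (hQt : ∀ k ∈ Q, ∃ i, k i < t)
    (i : Fin (e+1)) {j j' : Fin t} (hjj : j ≤ j') : sz t Q (i, j') ≤ sz t Q (i, j) := by
  rw [card_sliceR hQt, card_sliceR hQt]
  apply Finset.card_le_card_of_injOn (fun k => Function.update k i (j : ℕ))
  · intro k hk
    simp only [Finset.mem_coe] at hk ⊢
    rw [mem_slice hQt] at hk ⊢
    obtain ⟨hkQ, h1, h2⟩ := hk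
    have hupd : Function.update k i (j : ℕ) ≤ k := by
      intro x
      rcases eq_or_ne x i with rfl | hx
      · rw [Function.update_self, h1]
        exact_mod_cast hjj
      · rw [Function.update_of_ne hx]
    refine ⟨hQ hupd hkQ, by simp, fun i' hi' => ?_⟩
    rw [Function.update_of_ne hi'.ne]
    exact h2 i' hi'
  · intro k hk k' hk' h
    rw [Finset.mem_coe, mem_slice hQt] at hk hk'
    have hkey : ∀ x, x ≠ i → k x = k' x := by
      intro x hx
      have := congrFun h x
      simp only [Function.update_of_ne hx] at this
      exact this
    funext x
    rcases eq_or_ne x i with rfl | hx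
    · rw [hk.2.1, hk'.2.1]
    · exact hkey x hx

variable (t) in
def recon (f : Fin (e+1) × Fin t → Finset (Fin e → ℕ)) : Finset (Fin (e+1) → ℕ) :=
  Finset.univ.biUnion (fun s => (f s).image (up t s.1 (s.2 : ℕ)))

lemma recon_sliceR (hQt : ∀ k ∈ Q, ∃ i, k i < t) : recon t (sliceR t Q) = Q := by
  ext k
  simp only [recon, Finset.mem_biUnion, Finset.mem_univ, true_and, sliceR, Finset.mem_image]
  constructor
  · rintro ⟨s, x, ⟨k', hk', rfl⟩, rfl⟩
    rw [up_down_mem_slice hQt hk']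
    exact ((mem_slice hQt).mp hk').1
  · intro hk
    obtain ⟨h1, h2⟩ := minDir_spec (hQt k hk)
    refine ⟨(minDir t k, ⟨k (minDir t k), h1⟩), down t (minDir t k) k, ⟨k, ?_, rfl⟩, ?_⟩
    · rw [mem_slice hQt]
      exact ⟨hk, rfl, h2⟩
    · exact up_down rfl h2

variable (t) in
def key (Q : Finset (Fin (e+1) → ℕ)) (s : Fin (e+1) × Fin t) : ℕ :=
  (Q.card - sz t Q s) * ((e+1)*t) + ((s.1 : ℕ) * t + (s.2 : ℕ))

lemma idx_lt (s : Fin (e+1) × Fin t) : (s.1 : ℕ) * t + (s.2 : ℕ) < (e+1)*t := by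
  have h1 : (s.1 : ℕ) ≤ e := Nat.lt_succ_iff.mp s.1.2
  have h2 : (s.2 : ℕ) < t := s.2.2
  calc (s.1 : ℕ) * t + (s.2 : ℕ) < (s.1 : ℕ) * t + t := by omega
    _ = ((s.1 : ℕ) + 1) * t := by ring
    _ ≤ (e+1) * t := Nat.mul_le_mul_right _ (by omega)

lemma idx_inj {s s' : Fin (e+1) × Fin t}
    (h : (s.1 : ℕ) * t + (s.2 : ℕ) = (s'.1 : ℕ) * t + (s'.2 : ℕ)) : s = s' := by
  have h2 : (s.2 : ℕ) < t := s.2.2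
  have h2' : (s'.2 : ℕ) < t := s'.2.2
  have hfst : (s.1 : ℕ) = (s'.1 : ℕ) := by
    rcases Nat.lt_trichotomy (s.1 : ℕ) (s'.1 : ℕ) with hl | he | hl
    · have : ((s.1 : ℕ) + 1) * t ≤ (s'.1 : ℕ) * t := Nat.mul_le_mul_right _ hl
      nlinarith
    · exact he
    · have : ((s'.1 : ℕ) + 1) * t ≤ (s.1 : ℕ) * t := Nat.mul_le_mul_right _ hl
      nlinarith
  have hsnd : (s.2 : ℕ) = (s'.2 : ℕ) := by nlinarith
  exact Prod.ext (Fin.ext hfst) (Fin.ext hsnd)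

variable {Q : Finset (Fin (e+1) → ℕ)}

lemma key_inj : Function.Injective (key t Q) := by
  intro s s' h
  rw [key, key] at h
  have h1 := idx_lt s
  have h1' := idx_lt s'
  rcases le_or_gt (Q.card - sz t Q s) (Q.card - sz t Q s') with hab | hab
  · rcases eq_or_lt_of_le hab with heq | hlt
    · rw [heq] at h; exact idx_inj (by omega)
    · have : (Q.card - sz t Q s) * ((e+1)*t) + (e+1)*t ≤ (Q.card - sz t Q s') * ((e+1)*t) := by
        calc (Q.card - sz t Q s) * ((e+1)*t) + (e+1)*t = (Q.card - sz t Q s + 1) * ((e+1)*t) := by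
              ring
          _ ≤ (Q.card - sz t Q s') * ((e+1)*t) := Nat.mul_le_mul_right _ (by omega)
      omega
  · have : (Q.card - sz t Q s') * ((e+1)*t) + (e+1)*t ≤ (Q.card - sz t Q s) * ((e+1)*t) := by
      calc (Q.card - sz t Q s') * ((e+1)*t) + (e+1)*t = (Q.card - sz t Q s' + 1) * ((e+1)*t) := by
            ring
        _ ≤ (Q.card - sz t Q s) * ((e+1)*t) := Nat.mul_le_mul_right _ (by omega)
    omega

lemma key_lt_of_sz_lt {s s' : Fin (e+1) × Fin t} (hn : sz t Q s ≤ Q.card)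
    (h : sz t Q s' < sz t Q s) : key t Q s < key t Q s' := by
  have hA : Q.card - sz t Q s < Q.card - sz t Q s' := by omega
  have h1 := idx_lt s
  have h1' := idx_lt s'
  calc key t Q s < (Q.card - sz t Q s) * ((e+1)*t) + (e+1)*t := by
        rw [key]; omega
    _ = (Q.card - sz t Q s + 1) * ((e+1)*t) := by ring
    _ ≤ (Q.card - sz t Q s') * ((e+1)*t) := Nat.mul_le_mul_right _ (by omega)
    _ ≤ key t Q s' := Nat.le_add_right _ _

lemma key_lt_of_sz_le {s s' : Fin (e+1) × Fin t} (hsz : sz t Q s' ≤ sz t Q s)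
    (hidx : (s.1 : ℕ) * t + (s.2 : ℕ) < (s'.1 : ℕ) * t + (s'.2 : ℕ)) :
    key t Q s < key t Q s' := by
  have : (Q.card - sz t Q s) * ((e+1)*t) ≤ (Q.card - sz t Q s') * ((e+1)*t) :=
    Nat.mul_le_mul_right _ (by omega)
  rw [key, key]; omega

lemma key_row_strict (hQ : IsLowerSet (↑Q : Set (Fin (e+1) → ℕ)))
    (hQt : ∀ k ∈ Q, ∃ i, k i < t) (i : Fin (e+1)) {j j' : Fin t} (hjj : j < j') :
    key t Q (i, j) < key t Q (i, j') :=
  key_lt_of_sz_le (sz_anti hQ hQt i hjj.le) (by simp; omega)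

variable (t Q) in
def keyRel : Fin (e+1) × Fin t → Fin (e+1) × Fin t → Prop :=
  fun a b => key t Q a ≤ key t Q b

instance : DecidableRel (keyRel t Q) := fun _ _ => Nat.decLe _ _
instance : IsTrans (Fin (e+1) × Fin t) (keyRel t Q) := ⟨fun _ _ _ => le_trans⟩
instance : IsAntisymm (Fin (e+1) × Fin t) (keyRel t Q) :=
  ⟨fun _ _ h1 h2 => key_inj (le_antisymm h1 h2)⟩
instance : IsTotal (Fin (e+1) × Fin t) (keyRel t Q) := ⟨fun _ _ => le_total _ _⟩

variable (t Q) in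
def sortedSlots : List (Fin (e+1) × Fin t) :=
  Finset.sort Finset.univ (keyRel t Q)

lemma sortedSlots_length : (sortedSlots t Q).length = (e+1)*t := by
  rw [sortedSlots, Finset.length_sort, Finset.card_univ, Fintype.card_prod,
    Fintype.card_fin, Fintype.card_fin]

variable (t Q) in
def pi0 (l : Fin ((e+1)*t)) : Fin (e+1) × Fin t :=
  (sortedSlots t Q).get (Fin.cast (sortedSlots_length).symm l)

lemma pi0_lt {l l' : Fin ((e+1)*t)} (h : l < l') :
    key t Q (pi0 t Q l) < key t Q (pi0 t Q l') := by
  have hs : (sortedSlots t Q).Pairwise (keyRel t Q) := Finset.pairwise_sort _ _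
  have hnd : (sortedSlots t Q).Nodup := Finset.sort_nodup _ _
  unfold pi0
  have hle : keyRel t Q ((sortedSlots t Q).get (Fin.cast (sortedSlots_length).symm l))
      ((sortedSlots t Q).get (Fin.cast (sortedSlots_length).symm l')) :=
    List.Pairwise.rel_get_of_lt hs (by simpa using h)
  refine lt_of_le_of_ne hle (fun hc => ?_)
  have := (List.nodup_iff_injective_get.mp hnd) (key_inj hc)
  simp only [Fin.ext_iff, Fin.coe_cast] at this
  exact h.ne (Fin.ext this)

lemma pi0_bijective : Function.Bijective (pi0 t Q) := by
  constructor
  · intro a b hab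
    by_contra hne
    rcases Ne.lt_or_gt hne with h | h
    · exact absurd hab (fun hc => (pi0_lt h).ne (congrArg (key t Q) hc))
    · exact absurd hab.symm (fun hc => (pi0_lt h).ne (congrArg (key t Q) hc))
  · intro s
    have hmem : s ∈ sortedSlots t Q :=
      (Finset.mem_sort (s := Finset.univ) (r := keyRel t Q)).mpr (Finset.mem_univ s)
    obtain ⟨l, hl⟩ := List.get_of_mem hmem
    exact ⟨Fin.cast sortedSlots_length l, by unfold pi0; simpa using hl⟩

lemma sz_pi0_anti (hQt : ∀ k ∈ Q, ∃ i, k i < t) {l l' : Fin ((e+1)*t)} (h : l ≤ l') :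
    sz t Q (pi0 t Q l') ≤ sz t Q (pi0 t Q l) := by
  rcases eq_or_lt_of_le h with rfl | hlt
  · exact le_rfl
  by_contra hcon
  push_neg at hcon
  exact absurd (key_lt_of_sz_lt (sz_le_card hQt _) hcon) (not_lt.mpr (pi0_lt hlt).le)

variable (t Q) in
noncomputable def slotEquiv : Fin ((e+1)*t) ≃ (Fin (e+1) × Fin t) :=
  Equiv.ofBijective _ (pi0_bijective (Q := Q))

lemma slotEquiv_apply (l : Fin ((e+1)*t)) : slotEquiv t Q l = pi0 t Q l := rfl

lemma rho_strictMono (hQ : IsLowerSet (↑Q : Set (Fin (e+1) → ℕ)))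
    (hQt : ∀ k ∈ Q, ∃ i, k i < t) (i : Fin (e+1)) :
    StrictMono (fun j : Fin t => (slotEquiv t Q).symm (i, j)) := by
  intro j j' hjj
  rcases lt_trichotomy ((slotEquiv t Q).symm (i, j)) ((slotEquiv t Q).symm (i, j')) with h | h | h
  · exact h
  · exfalso
    have := congrArg (slotEquiv t Q) h
    simp only [Equiv.apply_symm_apply] at this
    exact absurd (congrArg Prod.snd this) (by simpa using hjj.ne)
  · exfalso
    have hk := pi0_lt (Q := Q) h
    rw [← slotEquiv_apply, ← slotEquiv_apply, Equiv.apply_symm_apply, Equiv.apply_symm_apply]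
      at hk
    exact absurd (key_row_strict hQ hQt i hjj) (not_lt.mpr hk.le)

lemma snd_pi0 (hQ : IsLowerSet (↑Q : Set (Fin (e+1) → ℕ)))
    (hQt : ∀ k ∈ Q, ∃ i, k i < t) (l : Fin ((e+1)*t)) :
    ((pi0 t Q l).2 : ℕ) =
      (Finset.univ.filter (fun l' => l' < l ∧ (pi0 t Q l').1 = (pi0 t Q l).1)).card := by
  set i := (pi0 t Q l).1
  set j := (pi0 t Q l).2
  have hl : (slotEquiv t Q).symm (i, j) = l := by
    rw [show ((i, j) : Fin (e+1) × Fin t) = slotEquiv t Q l from rfl, Equiv.symm_apply_apply]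
  rw [← Fin.card_Iio (b := j)]
  apply Finset.card_bij (fun j' _ => (slotEquiv t Q).symm (i, j'))
  · intro j' hj'
    rw [Finset.mem_Iio] at hj'
    rw [Finset.mem_filter]
    refine ⟨Finset.mem_univ _, ?_, ?_⟩
    · rw [← hl]
      exact rho_strictMono hQ hQt i hj'
    · rw [← slotEquiv_apply, Equiv.apply_symm_apply]
  · intro a _ b _ hab
    have := congrArg (slotEquiv t Q) hab
    simp only [Equiv.apply_symm_apply, Prod.mk.injEq] at this
    exact this.2
  · intro l' hl'
    rw [Finset.mem_filter] at hl'
    obtain ⟨-, hlt, hfst⟩ := hl'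
    refine ⟨(pi0 t Q l').2, ?_, ?_⟩
    · rw [Finset.mem_Iio]
      have : (slotEquiv t Q).symm (i, (pi0 t Q l').2) = l' := by
        rw [← hfst]
        rw [show ((pi0 t Q l').1, (pi0 t Q l').2) = slotEquiv t Q l' from rfl,
          Equiv.symm_apply_apply]
      by_contra hge
      push_neg at hge
      rcases eq_or_lt_of_le hge with heq | hgt
      · rw [← heq] at this
        rw [hl] at this
        exact absurd this hlt.ne'
      · have hmono := rho_strictMono hQ hQt i hgt
        simp only at hmono
        rw [hl, this] at hmono
        exact absurd hmono (not_lt.mpr hlt.le)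
    · rw [← hfst]
      rw [show ((pi0 t Q l').1, (pi0 t Q l').2) = slotEquiv t Q l' from rfl,
        Equiv.symm_apply_apply]

lemma getD_all_zero : ∀ (L : List ℕ), (∀ x ∈ L, x = 0) → ∀ l, L.getD l 0 = 0
  | [], _, l => by simp
  | a :: L, h, 0 => by simpa using h a (by simp)
  | a :: L, h, (l+1) => by
    rw [List.getD_cons_succ]
    exact getD_all_zero L (fun x hx => h x (by simp [hx])) l

lemma getD_filter_sorted : ∀ (L : List ℕ), L.Pairwise (· ≥ ·) →
    ∀ l, (L.filter (fun x => x ≠ 0)).getD l 0 = L.getD l 0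
  | [], _, l => by simp
  | a :: L, h, l => by
    rw [List.pairwise_cons] at h
    obtain ⟨ha, hL⟩ := h
    by_cases h0 : a = 0
    · subst h0
      have hz : ∀ x ∈ (0 : ℕ) :: L, x = 0 := by
        intro x hx
        rcases List.mem_cons.mp hx with rfl | hx
        · rfl
        · exact Nat.le_zero.mp (ha x hx)
      have hfil : ((0 : ℕ) :: L).filter (fun x => x ≠ 0) = [] := by
        rw [List.filter_eq_nil_iff]
        intro x hx
        simp [hz x hx]
      rw [hfil, getD_all_zero _ hz]
      simp
    · have hfil : (a :: L).filter (fun x => x ≠ 0) = a :: L.filter (fun x => x ≠ 0) := by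
        rw [List.filter_cons_of_pos (by simp [h0])]
      rw [hfil]
      cases l with
      | zero => simp
      | succ l =>
        rw [List.getD_cons_succ, List.getD_cons_succ]
        exact getD_filter_sorted L hL l

lemma sum_filter_ne_zero : ∀ (L : List ℕ), (L.filter (fun x => x ≠ 0)).sum = L.sum
  | [] => rfl
  | a :: L => by
    by_cases h0 : a = 0
    · subst h0
      rw [List.filter_cons_of_neg (by simp)]
      simpa using sum_filter_ne_zero L
    · rw [List.filter_cons_of_pos (by simp [h0]), List.sum_cons, List.sum_cons,
        sum_filter_ne_zero L]

variable (t Q) in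
def szList : List ℕ := List.ofFn (fun l : Fin ((e+1)*t) => sz t Q (pi0 t Q l))

lemma szList_sorted (hQt : ∀ k ∈ Q, ∃ i, k i < t) : (szList t Q).Pairwise (· ≥ ·) :=
  List.pairwise_ofFn.mpr (fun i j hij => sz_pi0_anti hQt hij.le)

lemma szList_sum (hQt : ∀ k ∈ Q, ∃ i, k i < t) : (szList t Q).sum = Q.card := by
  rw [szList, List.sum_ofFn]
  rw [Fintype.sum_bijective _ (pi0_bijective (Q := Q)) _ (fun s => sz t Q s) (fun l => rfl)]
  exact sum_sz hQt

variable (t Q) in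
def partOf (n : ℕ) (hQt : ∀ k ∈ Q, ∃ i, k i < t) (hc : Q.card = n) : Nat.Partition n where
  parts := (↑((szList t Q).filter (fun x => x ≠ 0)) : Multiset ℕ)
  parts_pos := by
    intro i hi
    simp only [Multiset.mem_coe, List.mem_filter, decide_eq_true_eq] at hi
    exact Nat.pos_of_ne_zero hi.2
  parts_sum := by
    rw [Multiset.sum_coe, sum_filter_ne_zero, szList_sum hQt, hc]

lemma partOf_card_le {n : ℕ} (hQt : ∀ k ∈ Q, ∃ i, k i < t) (hc : Q.card = n) :
    Multiset.card (partOf t Q n hQt hc).parts ≤ (e+1)*t := by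
  simp only [partOf, Multiset.coe_card]
  calc ((szList t Q).filter (fun x => x ≠ 0)).length ≤ (szList t Q).length :=
        List.length_filter_le _ _
    _ = (e+1)*t := by rw [szList, List.length_ofFn]

lemma parts_sort_getD {n : ℕ} (hQt : ∀ k ∈ Q, ∃ i, k i < t) (hc : Q.card = n)
    (l : Fin ((e+1)*t)) :
    ((partOf t Q n hQt hc).parts.sort (· ≥ ·)).getD (l : ℕ) 0 = sz t Q (pi0 t Q l) := by
  have h1 : (partOf t Q n hQt hc).parts.sort (· ≥ ·) = (szList t Q).filter (fun x => x ≠ 0) := by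
    refine List.Perm.eq_of_pairwise' (Multiset.pairwise_sort _ _) ((szList_sorted hQt).filter _) ?_
    rw [← Multiset.coe_eq_coe, Multiset.sort_eq]
    rfl
  rw [h1, getD_filter_sorted _ (szList_sorted hQt)]
  have hlen : (l : ℕ) < (szList t Q).length := by
    rw [szList, List.length_ofFn]; exact l.2
  rw [List.getD_eq_getElem _ _ hlen]
  simp [szList]

end WithQ

lemma prod_sort_getD {n m : ℕ} (p : Nat.Partition n) (hp : Multiset.card p.parts ≤ m)
    (f : ℕ → ℕ) (hf0 : f 0 = 1) :
    ∏ l : Fin m, f ((p.parts.sort (· ≥ ·)).getD (l : ℕ) 0) = (p.parts.map f).prod := by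
  set L := p.parts.sort (· ≥ ·) with hL
  have hlen : L.length ≤ m := by
    rw [hL, Multiset.length_sort]
    exact hp
  calc ∏ l : Fin m, f (L.getD (l : ℕ) 0)
      = ∏ l ∈ Finset.range m, f (L.getD l 0) := (Finset.prod_range (fun x => f (L.getD x 0))).symm
    _ = ∏ l ∈ Finset.range L.length, f (L.getD l 0) := by
        refine (Finset.prod_subset (Finset.range_subset_range.mpr hlen) ?_).symm
        intro x _ hx
        rw [Finset.mem_range, not_lt] at hx
        rw [List.getD_eq_default _ _ hx, hf0]
    _ = ∏ l : Fin L.length, f (L.getD (l : ℕ) 0) := Finset.prod_range (fun x => f (L.getD x 0))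
    _ = ∏ l : Fin L.length, f (L.get l) := by
        refine Finset.prod_congr rfl (fun l _ => ?_)
        rw [List.getD_eq_get (i := l)]
    _ = (List.ofFn (fun l => f (L.get l))).prod := (List.prod_ofFn).symm
    _ = ((List.ofFn L.get).map f).prod := by rw [List.map_ofFn]; rfl
    _ = (L.map f).prod := by rw [List.ofFn_get]
    _ = (p.parts.map f).prod := by
        conv_rhs => rw [← Multiset.sort_eq p.parts (· ≥ ·)]
        rw [Multiset.map_coe, Multiset.prod_coe]

lemma floor_root_pos {d n : ℕ} (hd : 1 ≤ d) (hn : 1 ≤ n) :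
    1 ≤ ⌊(n : ℝ) ^ ((1:ℝ)/(d:ℝ))⌋₊ := by
  apply Nat.le_floor
  rw [Nat.cast_one]
  apply Real.one_le_rpow (by exact_mod_cast hn) (by positivity)

lemma lt_pow_floor_root {d n : ℕ} (hd : 1 ≤ d) (hn : 1 ≤ n) :
    n < (⌊(n : ℝ) ^ ((1:ℝ)/(d:ℝ))⌋₊ + 1)^d := by
  set t := ⌊(n : ℝ) ^ ((1:ℝ)/(d:ℝ))⌋₊ with ht
  have h1 : (n:ℝ) ^ ((1:ℝ)/(d:ℝ)) < (t:ℝ) + 1 := Nat.lt_floor_add_one _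
  have hb : (0:ℝ) ≤ (n:ℝ) ^ ((1:ℝ)/(d:ℝ)) := Real.rpow_nonneg (by positivity) _
  have hd0 : ((d:ℝ)) ≠ 0 := by
    have : (0:ℝ) < (d:ℝ) := by exact_mod_cast hd
    exact this.ne'
  have h2 : (n:ℝ) < ((t:ℝ)+1)^(d:ℕ) := by
    calc (n:ℝ) = ((n:ℝ) ^ ((1:ℝ)/(d:ℝ)))^(d:ℕ) := by
          rw [← Real.rpow_natCast ((n:ℝ) ^ ((1:ℝ)/(d:ℝ))) d, ← Real.rpow_mul (by positivity),
            one_div, inv_mul_cancel₀ hd0, Real.rpow_one]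
      _ < ((t:ℝ)+1)^(d:ℕ) := by
          apply pow_lt_pow_left₀ h1 hb
          omega
  have := h2
  rw [show ((t:ℝ)+1) = ((t+1 : ℕ) : ℝ) by push_cast; ring, ← Nat.cast_pow] at this
  exact_mod_cast this

lemma exists_coord_lt {e t n : ℕ} {Q : Finset (Fin (e+1) → ℕ)}
    (hQ : IsLowerSet (↑Q : Set (Fin (e+1) → ℕ))) (hc : Q.card = n)
    (hlt : n < (t+1)^(e+1)) : ∀ k ∈ Q, ∃ i, k i < t := by
  intro k hk
  by_contra hcon
  push_neg at hcon
  have h1 : (t+1)^(e+1) ≤ ∏ i, (k i + 1) := by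
    calc (t+1)^(e+1) = ∏ _i : Fin (e+1), (t+1) := by
          rw [Finset.prod_const, Finset.card_univ, Fintype.card_fin]
      _ ≤ ∏ i, (k i + 1) :=
          Finset.prod_le_prod (fun _ _ => Nat.zero_le _)
            (fun i _ => by have := hcon i; omega)
  have h2 := box_le hQ hk
  omega

end LowerAux

open LowerAux

theorem stmt_13 (d n : ℕ) (hd : 2 ≤ d) (hn : 1 ≤ n) :
    lowerCount d n ≤
      d ^ (d * ⌊(n : ℝ) ^ ((1 : ℝ) / (d : ℝ))⌋₊) *
        ∑ p ∈ Finset.univ.filter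
            (fun p : Nat.Partition n =>
              Multiset.card p.parts ≤ d * ⌊(n : ℝ) ^ ((1 : ℝ) / (d : ℝ))⌋₊),
          (p.parts.map (fun i => lowerCount (d - 1) i)).prod := by
  classical
  obtain ⟨e, rfl⟩ : ∃ e, d = e + 1 := ⟨d - 1, by omega⟩
  set t := ⌊(n : ℝ) ^ ((1 : ℝ) / ((e+1 : ℕ) : ℝ))⌋₊ with htdef
  have hlt : n < (t+1)^(e+1) := lt_pow_floor_root (by omega) hn
  have hQt : ∀ (Q : Finset (Fin (e+1) → ℕ)), IsLowerSet (↑Q : Set (Fin (e+1) → ℕ)) →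
      Q.card = n → ∀ k ∈ Q, ∃ i, k i < t :=
    fun Q hQ hc => exists_coord_lt hQ hc hlt
  -- the target type
  haveI : ∀ v : ℕ, Fintype {R : Finset (Fin e → ℕ) //
      IsLowerSet (↑R : Set (Fin e → ℕ)) ∧ R.card = v} := fun v => Fintype.ofFinite _
  let Om := {p : Nat.Partition n // Multiset.card p.parts ≤ (e+1)*t}
  let F : Om → Type := fun p => ∀ l : Fin ((e+1)*t),
    {R : Finset (Fin e → ℕ) // IsLowerSet (↑R : Set (Fin e → ℕ)) ∧
      R.card = ((p.1.parts.sort (· ≥ ·)).getD (l : ℕ) 0)}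
  let B := (Fin ((e+1)*t) → Fin (e+1)) × Σ p : Om, F p
  let LSn := {Q : Finset (Fin (e+1) → ℕ) //
    IsLowerSet (↑Q : Set (Fin (e+1) → ℕ)) ∧ Q.card = n}
  let enc : LSn → B := fun Q =>
    ( fun l => (pi0 t Q.1 l).1,
      ⟨⟨partOf t Q.1 n (hQt Q.1 Q.2.1 Q.2.2) Q.2.2, partOf_card_le _ _⟩,
       fun l => ⟨sliceR t Q.1 (pi0 t Q.1 l),
         lower_sliceR Q.2.1 (hQt Q.1 Q.2.1 Q.2.2) _,
         (parts_sort_getD (hQt Q.1 Q.2.1 Q.2.2) Q.2.2 l).symm⟩⟩ )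
  have hinj : Function.Injective enc := by
    rintro ⟨Q, hQ, hc⟩ ⟨Q', hQ', hc'⟩ h
    have h1 : (fun l => (pi0 t Q l).1) = (fun l => (pi0 t Q' l).1) := congrArg Prod.fst h
    have h2 := congrArg Prod.snd h
    have hfam : ∀ l, sliceR t Q (pi0 t Q l) = sliceR t Q' (pi0 t Q' l) := by
      intro l
      have := congrArg (fun (x : Σ p : Om, F p) => ((x.2 l).1 : Finset (Fin e → ℕ))) h2
      exact this
    have hpi : pi0 t Q = pi0 t Q' := by
      funext l
      have hfst : (pi0 t Q l).1 = (pi0 t Q' l).1 := congrFun h1 l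
      have hsnd : ((pi0 t Q l).2 : ℕ) = ((pi0 t Q' l).2 : ℕ) := by
        rw [snd_pi0 hQ (hQt Q hQ hc) l, snd_pi0 hQ' (hQt Q' hQ' hc') l]
        apply congrArg
        apply Finset.filter_congr
        intro l' _
        rw [hfst]
        have : (pi0 t Q l').1 = (pi0 t Q' l').1 := congrFun h1 l'
        rw [this]
      exact Prod.ext hfst (Fin.ext hsnd)
    have hslice : ∀ s, sliceR t Q s = sliceR t Q' s := by
      intro s
      obtain ⟨l, rfl⟩ := (pi0_bijective (Q := Q)).2 s
      rw [hfam l, hpi]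
    have : Q = Q' := by
      rw [← recon_sliceR (Q := Q) (hQt Q hQ hc), ← recon_sliceR (Q := Q') (hQt Q' hQ' hc')]
      unfold recon
      congr 1
      funext s
      rw [hslice s]
    exact Subtype.ext this
  have hLS : ∀ v : ℕ, Fintype.card {R : Finset (Fin e → ℕ) //
      IsLowerSet (↑R : Set (Fin e → ℕ)) ∧ R.card = v} = lowerCount e v :=
    fun v => (Nat.card_eq_fintype_card).symm
  have hcardB : Nat.card B = (e+1) ^ ((e+1)*t) *
      ∑ p ∈ Finset.univ.filter
          (fun p : Nat.Partition n => Multiset.card p.parts ≤ (e+1)*t),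
        (p.parts.map (fun i => lowerCount e i)).prod := by
    rw [Nat.card_prod, Nat.card_eq_fintype_card, Nat.card_eq_fintype_card]
    congr 1
    · simp [Fintype.card_fun]
    · rw [Fintype.card_sigma]
      have hterm : ∀ p : Om, Fintype.card (F p) = (p.1.parts.map (fun i => lowerCount e i)).prod := by
        intro p
        rw [Fintype.card_pi]
        have : ∀ l : Fin ((e+1)*t), Fintype.card
            {R : Finset (Fin e → ℕ) // IsLowerSet (↑R : Set (Fin e → ℕ)) ∧
              R.card = ((p.1.parts.sort (· ≥ ·)).getD (l : ℕ) 0)} =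
            lowerCount e ((p.1.parts.sort (· ≥ ·)).getD (l : ℕ) 0) := fun l => hLS _
        rw [Finset.prod_congr rfl (fun l _ => this l)]
        exact prod_sort_getD p.1 p.2 (fun i => lowerCount e i) (lowerCount_zero e)
      rw [Finset.sum_congr rfl (fun p _ => hterm p)]
      have hsum : ∑ p ∈ Finset.univ.filter
            (fun p : Nat.Partition n => Multiset.card p.parts ≤ (e+1)*t),
          (p.parts.map (fun i => lowerCount e i)).prod
          = ∑ p : {p : Nat.Partition n // Multiset.card p.parts ≤ (e+1)*t},
            ((p : Nat.Partition n).parts.map (fun i => lowerCount e i)).prod :=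
        Finset.sum_subtype _ (fun x => by simp) _
      exact hsum.symm
  have hmain : lowerCount (e+1) n ≤ Nat.card B := by
    have : lowerCount (e+1) n = Nat.card LSn := rfl
    rw [this]
    exact Nat.card_le_card_of_injective enc hinj
  rw [hcardB] at hmain
  simpa using hmain
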